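/- Let d_0, d_1, …, d_n be positive reals and s ≥ 0. For −1 ≤ i ≤ n define M(i,s) as follows: M(−1,s) = 0, and for 0 ≤ i ≤ n, M(i,s) is the minimum of Σ_{j ∈ C} d_j over all sets C ⊆ {0,…,i} with 0 ∈ C such that every maximal block of consecutive indices in {1,…,i} \ C has d-sum at most s (this minimum exists since C = {0,…,i} is always feasible). Then M(0,s) = d_0, and for every 1 ≤ i ≤ n, M(i,s) = min_{l(i) ≤ j ≤ i} ( d_j + M(j−1, s) ), where l(i) is the least j with 0 ≤ j ≤ i and Σ_{k=j+1}^{i} d_k ≤ s. -/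
import Mathlib


/-- Every maximal block of consecutive indices in `{1,…,i} \ C` (a segment,
including the trailing block) has `d`-sum at most `s`: a block `[a,b]` with
`1 ≤ a ≤ b ≤ i` disjoint from `C` is maximal when `a = 1` or `a−1 ∈ C`, and
`b = i` or `b+1 ∈ C`. -/
def SegFeasible (d : ℕ → ℝ) (s : ℝ) (i : ℕ) (C : Finset ℕ) : Prop :=
  ∀ a b : ℕ, 1 ≤ a → a ≤ b → b ≤ i →
    (∀ k, a ≤ k → k ≤ b → k ∉ C) →
    (a = 1 ∨ a - 1 ∈ C) → (b = i ∨ b + 1 ∈ C) →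
    ∑ k ∈ Finset.Icc a b, d k ≤ s

/-- `Mck d s (i+1) = M(i,s)`: the minimum of `Σ_{j ∈ C} d_j` over sets
`C ⊆ {0,…,i}` with `0 ∈ C` whose every segment has `d`-sum at most `s`
(the minimum exists since `C = {0,…,i}` is feasible); and `Mck d s 0 = M(−1,s) = 0`. -/
noncomputable def Mck (d : ℕ → ℝ) (s : ℝ) : ℕ → ℝ
  | 0 => 0
  | (i + 1) => sInf {x : ℝ | ∃ C : Finset ℕ, C ⊆ Finset.range (i + 1) ∧ 0 ∈ C ∧
      SegFeasible d s i C ∧ x = ∑ j ∈ C, d j}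

namespace CkAux

/-- The feasible-sum set. -/
def S (d : ℕ → ℝ) (s : ℝ) (i : ℕ) : Set ℝ :=
  {x : ℝ | ∃ C : Finset ℕ, C ⊆ Finset.range (i + 1) ∧ 0 ∈ C ∧
      SegFeasible d s i C ∧ x = ∑ j ∈ C, d j}

lemma Mck_succ (d : ℕ → ℝ) (s : ℝ) (i : ℕ) : Mck d s (i + 1) = sInf (S d s i) := rfl

lemma S_nonempty (d : ℕ → ℝ) (s : ℝ) (i : ℕ) : (S d s i).Nonempty := by
  refine ⟨∑ j ∈ Finset.range (i + 1), d j, Finset.range (i + 1), Finset.Subset.refl _,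
    Finset.mem_range.mpr (by omega), ?_, rfl⟩
  intro a b ha hab hbi hdis _ _
  exact absurd (Finset.mem_range.mpr (by omega)) (hdis a le_rfl hab)

lemma S_lb {n : ℕ} {d : ℕ → ℝ} (hd : ∀ k ≤ n, 0 < d k) {s : ℝ} {i : ℕ} (hi : i ≤ n) :
    ∀ x ∈ S d s i, (0 : ℝ) ≤ x := by
  rintro x ⟨C, hC, -, -, rfl⟩
  exact Finset.sum_nonneg fun j hj =>
    (hd j (by have := Finset.mem_range.mp (hC hj); omega)).le

lemma S_bddBelow {n : ℕ} {d : ℕ → ℝ} (hd : ∀ k ≤ n, 0 < d k) {s : ℝ} {i : ℕ} (hi : i ≤ n) :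
    BddBelow (S d s i) := ⟨0, fun x hx => S_lb hd hi x hx⟩

/-- Extension: add checkpoint `j ≥ 1` to a feasible set for the prefix `j-1`. -/
lemma extend {n : ℕ} {d : ℕ → ℝ} (hd : ∀ k ≤ n, 0 < d k) {s : ℝ} {i j : ℕ}
    (hi : i ≤ n) (hj1 : 1 ≤ j) (hji : j ≤ i)
    (hsum : ∑ k ∈ Finset.Ioc j i, d k ≤ s)
    {x : ℝ} (hx : x ∈ S d s (j - 1)) : d j + x ∈ S d s i := by
  obtain ⟨C', hC'sub, hC'0, hC'feas, rfl⟩ := hx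
  have hjC' : j ∉ C' := fun h => by
    have := Finset.mem_range.mp (hC'sub h); omega
  refine ⟨insert j C', ?_, Finset.mem_insert_of_mem hC'0, ?_, ?_⟩
  · intro k hk
    rcases Finset.mem_insert.mp hk with rfl | hk
    · exact Finset.mem_range.mpr (by omega)
    · exact Finset.mem_range.mpr (by have := Finset.mem_range.mp (hC'sub hk); omega)
  · intro a b ha hab hbi hdis hleft hright
    have hjout : j < a ∨ b < j := by
      by_contra h
      push_neg at h
      exact hdis j h.1 h.2 (Finset.mem_insert_self _ _)
    rcases hjout with hja | hbj
    · -- block is to the right of j; by maximality a = j + 1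
      have ha' : a = j + 1 := by
        rcases hleft with rfl | hmem
        · omega
        · rcases Finset.mem_insert.mp hmem with h | h
          · omega
          · have := Finset.mem_range.mp (hC'sub h); omega
      subst ha'
      calc ∑ k ∈ Finset.Icc (j + 1) b, d k
          ≤ ∑ k ∈ Finset.Ioc j i, d k := by
            apply Finset.sum_le_sum_of_subset_of_nonneg
            · intro k hk
              have := Finset.mem_Icc.mp hk
              exact Finset.mem_Ioc.mpr (by omega)
            · intro k hk _
              have := Finset.mem_Ioc.mp hk
              exact (hd k (by omega)).le
        _ ≤ s := hsum
    · -- block is to the left of j; use feasibility of C' for prefix j - 1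
      apply hC'feas a b ha hab (by omega)
      · intro k hka hkb hk
        exact hdis k hka hkb (Finset.mem_insert_of_mem hk)
      · rcases hleft with h | hmem
        · exact Or.inl h
        · rcases Finset.mem_insert.mp hmem with h | h
          · omega
          · exact Or.inr h
      · rcases hright with rfl | hmem
        · omega
        · rcases Finset.mem_insert.mp hmem with h | h
          · exact Or.inl (by omega)
          · exact Or.inr h
  · rw [Finset.sum_insert hjC']

/-- Restriction: from a feasible set for prefix `i`, peel off the maximal checkpoint. -/
lemma restrict {n : ℕ} {d : ℕ → ℝ} (hd : ∀ k ≤ n, 0 < d k) {s : ℝ} (hs : 0 ≤ s) {i : ℕ}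
    (hi : i ≤ n) {x : ℝ} (hx : x ∈ S d s i) :
    ∃ j, j ≤ i ∧ (∑ k ∈ Finset.Ioc j i, d k ≤ s) ∧ d j + Mck d s j ≤ x := by
  obtain ⟨C, hCsub, hC0, hCfeas, rfl⟩ := hx
  have hCne : C.Nonempty := ⟨0, hC0⟩
  obtain ⟨j, hjdef⟩ : ∃ j, j = C.max' hCne := ⟨_, rfl⟩
  have hjC : j ∈ C := hjdef ▸ C.max'_mem hCne
  have hmax : ∀ k ∈ C, k ≤ j := fun k hk => hjdef ▸ C.le_max' k hk
  have hji : j ≤ i := by have := Finset.mem_range.mp (hCsub hjC); omega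
  have hsum : ∑ k ∈ Finset.Ioc j i, d k ≤ s := by
    rcases eq_or_lt_of_le hji with rfl | hlt
    · simp [hs]
    · have := hCfeas (j + 1) i (by omega) (by omega) le_rfl
        (fun k hk1 hk2 hkC => by have := hmax k hkC; omega)
        (Or.inr (by simpa using hjC)) (Or.inl rfl)
      rwa [← Finset.Icc_add_one_left_eq_Ioc]
  refine ⟨j, hji, hsum, ?_⟩
  rcases Nat.eq_zero_or_pos j with rfl | hj1
  · -- C = {0}
    have hC : C = {0} := by
      apply Finset.eq_singleton_iff_unique_mem.mpr
      exact ⟨hC0, fun k hk => Nat.le_zero.mp (hmax k hk)⟩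
    rw [hC, Finset.sum_singleton]
    simp [Mck]
  · -- peel off j
    obtain ⟨m, rfl⟩ : ∃ m, j = m + 1 := ⟨j - 1, by omega⟩
    have hsumC : d (m + 1) + ∑ k ∈ C.erase (m + 1), d k = ∑ k ∈ C, d k :=
      Finset.add_sum_erase _ _ hjC
    have hmem : (∑ k ∈ C.erase (m + 1), d k) ∈ S d s m := by
      refine ⟨C.erase (m + 1), ?_, Finset.mem_erase.mpr ⟨by omega, hC0⟩, ?_, rfl⟩
      · intro k hk
        have h1 := Finset.mem_erase.mp hk
        have := hmax k h1.2
        exact Finset.mem_range.mpr (by omega)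
      · intro a b ha hab hbm hdis hleft hright
        apply hCfeas a b ha hab (by omega)
        · intro k hka hkb hk
          exact hdis k hka hkb (Finset.mem_erase.mpr ⟨by omega, hk⟩)
        · rcases hleft with h | h
          · exact Or.inl h
          · exact Or.inr (Finset.mem_of_mem_erase h)
        · rcases hright with rfl | h
          · exact Or.inr (by simpa using hjC)
          · exact Or.inr (Finset.mem_of_mem_erase h)
    have hMle : Mck d s (m + 1) ≤ ∑ k ∈ C.erase (m + 1), d k := by
      rw [Mck_succ]
      exact csInf_le (S_bddBelow hd (by omega)) hmem
    linarith

end CkAux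

open CkAux in
/-- The dynamic-programming recursion (Equation (10)) for the checkpoint
selection problem. -/
theorem checkpoint_selection_recursion (n : ℕ) (d : ℕ → ℝ)
    (hd : ∀ k ≤ n, 0 < d k) (s : ℝ) (hs : 0 ≤ s) :
    Mck d s 1 = d 0 ∧
    ∀ i, 1 ≤ i → i ≤ n →
      Mck d s (i + 1) =
        sInf {x : ℝ | ∃ j,
          sInf {j' : ℕ | j' ≤ i ∧ ∑ k ∈ Finset.Ioc j' i, d k ≤ s} ≤ j ∧
          j ≤ i ∧ x = d j + Mck d s j} := by
  constructor
  · -- base case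
    have hSet : S d s 0 = {d 0} := by
      ext x
      constructor
      · rintro ⟨C, hCsub, hC0, -, rfl⟩
        have : C = {0} := by
          rcases Finset.subset_singleton_iff.mp (by simpa using hCsub) with rfl | rfl
          · exact absurd hC0 (Finset.notMem_empty 0)
          · rfl
        rw [this, Finset.sum_singleton]; rfl
      · rintro rfl
        refine ⟨{0}, by simp, Finset.mem_singleton_self 0, ?_, (Finset.sum_singleton _ _).symm⟩
        intro a b ha hab hbi _ _ _
        omega
    rw [Mck_succ, hSet, csInf_singleton]
  · intro i hi1 hin
    set lset : Set ℕ := {j' : ℕ | j' ≤ i ∧ ∑ k ∈ Finset.Ioc j' i, d k ≤ s} with hlsetdef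
    have hilset : i ∈ lset := ⟨le_rfl, by simp [hs]⟩
    set l : ℕ := sInf lset with hldef
    have hlmem : l ∈ lset := Nat.sInf_mem ⟨i, hilset⟩
    have hli : l ≤ i := hlmem.1
    have hmono : ∀ j, l ≤ j → j ≤ i → ∑ k ∈ Finset.Ioc j i, d k ≤ s := by
      intro j hlj hji
      calc ∑ k ∈ Finset.Ioc j i, d k
          ≤ ∑ k ∈ Finset.Ioc l i, d k := by
            apply Finset.sum_le_sum_of_subset_of_nonneg (Finset.Ioc_subset_Ioc_left hlj)
            intro k hk _
            have := Finset.mem_Ioc.mp hk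
            exact (hd k (by omega)).le
        _ ≤ s := hlmem.2
    set T : Set ℝ := {x : ℝ | ∃ j, l ≤ j ∧ j ≤ i ∧ x = d j + Mck d s j} with hTdef
    have hTne : T.Nonempty := ⟨d i + Mck d s i, i, hli, le_rfl, rfl⟩
    have hTfin : T = ↑((Finset.Icc l i).image (fun j => d j + Mck d s j)) := by
      ext x
      simp only [hTdef, Set.mem_setOf_eq, Finset.coe_image, Set.mem_image,
        Finset.mem_coe, Finset.mem_Icc]
      constructor
      · rintro ⟨j, h1, h2, rfl⟩; exact ⟨j, ⟨h1, h2⟩, rfl⟩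
      · rintro ⟨j, ⟨h1, h2⟩, rfl⟩; exact ⟨j, h1, h2, rfl⟩
    have hTbdd : BddBelow T := hTfin ▸ (Finset.finite_toSet _).bddBelow
    rw [Mck_succ]
    apply le_antisymm
    · -- sInf (S d s i) ≤ sInf T
      apply le_csInf hTne
      rintro x ⟨j, hlj, hji, rfl⟩
      rcases Nat.eq_zero_or_pos j with rfl | hj1
      · -- j = 0 : C = {0}
        have hmem : d 0 ∈ S d s i := by
          refine ⟨{0}, by simp, Finset.mem_singleton_self 0, ?_,
            (Finset.sum_singleton _ _).symm⟩
          intro a b ha hab hbi hdis hleft hright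
          have ha1 : a = 1 := by
            rcases hleft with h | h
            · exact h
            · simp at h; omega
          subst ha1
          have hbi' : b = i := by
            rcases hright with h | h
            · exact h
            · simp at h
          have : Finset.Icc 1 b = Finset.Ioc 0 b := Finset.Icc_add_one_left_eq_Ioc 0 b
          rw [this, hbi']
          exact hmono 0 hlj (Nat.zero_le i)
        have := csInf_le (S_bddBelow hd hin) hmem
        simpa [Mck] using this
      · -- j ≥ 1
        obtain ⟨m, rfl⟩ : ∃ m, j = m + 1 := ⟨j - 1, by omega⟩
        have key : ∀ x ∈ S d s m, sInf (S d s i) ≤ d (m + 1) + x := by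
          intro x hx
          have hmem : d (m + 1) + x ∈ S d s i :=
            extend hd hin (by omega) hji (hmono (m + 1) hlj hji)
              (by simpa using hx)
          exact csInf_le (S_bddBelow hd hin) hmem
        have : sInf (S d s i) - d (m + 1) ≤ sInf (S d s m) := by
          apply le_csInf (S_nonempty d s m)
          intro x hx
          linarith [key x hx]
        rw [Mck_succ]
        linarith
    · -- sInf T ≤ sInf (S d s i)
      apply le_csInf (S_nonempty d s i)
      intro x hx
      obtain ⟨j, hji, hsum, hle⟩ := restrict hd hs hin hx
      have hlj : l ≤ j := Nat.sInf_le ⟨hji, hsum⟩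
      have : d j + Mck d s j ∈ T := ⟨j, hlj, hji, rfl⟩
      exact le_trans (csInf_le hTbdd this) hle
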